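/- The subgroup of SL(2,Z) generated by the matrices [[1,2],[0,1]] and [[1,0],[2,1]] is a free group of rank 2. -/

import Mathlib

/-- The matrix `[[1,2],[0,1]]` as an element of `SL(2,ℤ)`. -/
def f1 : Matrix.SpecialLinearGroup (Fin 2) ℤ :=
  ⟨!![1, 2; 0, 1], by norm_num [Matrix.det_fin_two_of]⟩

/-- The matrix `[[1,0],[2,1]]` as an element of `SL(2,ℤ)`. -/
def f2 : Matrix.SpecialLinearGroup (Fin 2) ℤ :=
  ⟨!![1, 0; 2, 1], by norm_num [Matrix.det_fin_two_of]⟩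

abbrev SL2 := Matrix.SpecialLinearGroup (Fin 2) ℤ

def V : Type := {v : Fin 2 → ℤ // v ≠ 0}

instance : SMul SL2 V :=
  ⟨fun g v => ⟨(g : Matrix (Fin 2) (Fin 2) ℤ).mulVec v.1, by
    intro h
    apply v.2
    have : ((g⁻¹ : SL2) : Matrix (Fin 2) (Fin 2) ℤ).mulVec
        ((g : Matrix (Fin 2) (Fin 2) ℤ).mulVec v.1) = v.1 := by
      rw [Matrix.mulVec_mulVec, ← Matrix.SpecialLinearGroup.coe_mul, inv_mul_cancel,
        Matrix.SpecialLinearGroup.coe_one, Matrix.one_mulVec]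
    rw [h, Matrix.mulVec_zero] at this
    exact this.symm⟩⟩

lemma smul_coe (g : SL2) (v : V) :
    (g • v : V).1 = (g : Matrix (Fin 2) (Fin 2) ℤ).mulVec v.1 := rfl

instance : MulAction SL2 V where
  one_smul v := Subtype.ext (by
    rw [smul_coe, Matrix.SpecialLinearGroup.coe_one, Matrix.one_mulVec])
  mul_smul g h v := Subtype.ext (by
    rw [smul_coe, smul_coe, smul_coe, Matrix.SpecialLinearGroup.coe_mul,
      Matrix.mulVec_mulVec])

lemma f1_inv : f1⁻¹ = (⟨!![1, -2; 0, 1], by norm_num [Matrix.det_fin_two_of]⟩ : SL2) := by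
  refine (eq_comm.trans eq_inv_iff_mul_eq_one).2 ?_
  ext i j
  show (!![1, -2; 0, 1] * !![1, 2; 0, 1] : Matrix (Fin 2) (Fin 2) ℤ) i j = (1 : Matrix (Fin 2) (Fin 2) ℤ) i j
  fin_cases i <;> fin_cases j <;> simp [f1, Matrix.mul_apply, Fin.sum_univ_two]

lemma f2_inv : f2⁻¹ = (⟨!![1, 0; -2, 1], by norm_num [Matrix.det_fin_two_of]⟩ : SL2) := by
  refine (eq_comm.trans eq_inv_iff_mul_eq_one).2 ?_
  ext i j
  show (!![1, 0; -2, 1] * !![1, 0; 2, 1] : Matrix (Fin 2) (Fin 2) ℤ) i j = (1 : Matrix (Fin 2) (Fin 2) ℤ) i j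
  fin_cases i <;> fin_cases j <;> simp [f2, Matrix.mul_apply, Fin.sum_univ_two]

lemma f1_smul (v : V) : (f1 • v).1 = ![v.1 0 + 2 * v.1 1, v.1 1] := by
  rw [smul_coe]; funext i
  fin_cases i <;> simp [f1, Matrix.mulVec, dotProduct, Fin.sum_univ_two, Matrix.vecHead, Matrix.vecTail]

lemma f1_inv_smul (v : V) : (f1⁻¹ • v).1 = ![v.1 0 - 2 * v.1 1, v.1 1] := by
  rw [smul_coe, f1_inv]; funext i
  fin_cases i <;> simp [Matrix.mulVec, dotProduct, Fin.sum_univ_two, Matrix.vecHead, Matrix.vecTail] <;> ring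

lemma f2_smul (v : V) : (f2 • v).1 = ![v.1 0, 2 * v.1 0 + v.1 1] := by
  rw [smul_coe]; funext i
  fin_cases i <;> simp [f2, Matrix.mulVec, dotProduct, Fin.sum_univ_two, Matrix.vecHead, Matrix.vecTail] <;> ring

lemma f2_inv_smul (v : V) : (f2⁻¹ • v).1 = ![v.1 0, v.1 1 - 2 * v.1 0] := by
  rw [smul_coe, f2_inv]; funext i
  fin_cases i <;> simp [Matrix.mulVec, dotProduct, Fin.sum_univ_two, Matrix.vecHead, Matrix.vecTail] <;> ring

lemma vne (v : V) : v.1 0 ≠ 0 ∨ v.1 1 ≠ 0 := by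
  by_contra h
  push_neg at h
  apply v.2
  funext i
  fin_cases i <;> simp [h.1, h.2]

def X0 : Set V := {v | (0 < v.1 1 ∧ v.1 1 < v.1 0) ∨ (v.1 0 < v.1 1 ∧ v.1 1 < 0) ∨ v.1 0 = v.1 1}
def Y0 : Set V := {v | (0 < v.1 0 ∧ v.1 1 ≤ 0 ∧ -v.1 1 < v.1 0) ∨ (v.1 0 < 0 ∧ 0 ≤ v.1 1 ∧ v.1 1 < -v.1 0)}
def X1 : Set V := {v | (0 < v.1 0 ∧ v.1 0 < v.1 1) ∨ (v.1 1 < v.1 0 ∧ v.1 0 < 0) ∨ v.1 0 = 0}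
def Y1 : Set V := {v | (v.1 0 < 0 ∧ 0 < v.1 1 ∧ -v.1 0 < v.1 1) ∨ (0 < v.1 0 ∧ v.1 1 < 0 ∧ v.1 0 < -v.1 1) ∨ v.1 0 = -v.1 1}

section
open Pointwise

lemma pp_nonempty : ∀ i, (![X0, X1] i).Nonempty := by
  intro i
  fin_cases i
  · exact ⟨⟨![2, 1], by intro h; simpa using congrFun h 0⟩, Or.inl (by norm_num)⟩
  · exact ⟨⟨![1, 2], by intro h; simpa using congrFun h 0⟩, Or.inl (by norm_num)⟩

lemma dXX : Disjoint X0 X1 := by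
  rw [Set.disjoint_left]
  rintro v hv hv'
  have := vne v
  simp only [X0, X1, Set.mem_setOf_eq] at hv hv'
  omega

lemma dYY : Disjoint Y0 Y1 := by
  rw [Set.disjoint_left]
  rintro v hv hv'
  have := vne v
  simp only [Y0, Y1, Set.mem_setOf_eq] at hv hv'
  omega

lemma dXY : ∀ (A : Set V), (A = X0 ∨ A = X1) → ∀ B, (B = Y0 ∨ B = Y1) → Disjoint A B := by
  rintro A (rfl | rfl) B (rfl | rfl) <;>
  · rw [Set.disjoint_left]
    rintro v hv hv'
    have := vne v
    simp only [X0, X1, Y0, Y1, Set.mem_setOf_eq] at hv hv'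
    omega

lemma hX0 : f1 • (Y0)ᶜ ⊆ X0 := by
  rintro _ ⟨w, hw, rfl⟩
  have := vne w
  simp only [Set.mem_compl_iff, Y0, Set.mem_setOf_eq] at hw
  simp only [X0, Set.mem_setOf_eq, f1_smul, Matrix.cons_val_zero, Matrix.cons_val_one,
    Matrix.head_cons]
  omega

lemma hX1 : f2 • (Y1)ᶜ ⊆ X1 := by
  rintro _ ⟨w, hw, rfl⟩
  have := vne w
  simp only [Set.mem_compl_iff, Y1, Set.mem_setOf_eq] at hw
  simp only [X1, Set.mem_setOf_eq, f2_smul, Matrix.cons_val_zero, Matrix.cons_val_one,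
    Matrix.head_cons]
  omega

lemma hY0 : f1⁻¹ • (X0)ᶜ ⊆ Y0 := by
  rintro _ ⟨w, hw, rfl⟩
  have := vne w
  simp only [Set.mem_compl_iff, X0, Set.mem_setOf_eq] at hw
  simp only [Y0, Set.mem_setOf_eq, f1_inv_smul, Matrix.cons_val_zero, Matrix.cons_val_one,
    Matrix.head_cons]
  omega

lemma hY1 : f2⁻¹ • (X1)ᶜ ⊆ Y1 := by
  rintro _ ⟨w, hw, rfl⟩
  have := vne w
  simp only [Set.mem_compl_iff, X1, Set.mem_setOf_eq] at hw
  simp only [Y1, Set.mem_setOf_eq, f2_inv_smul, Matrix.cons_val_zero, Matrix.cons_val_one,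
    Matrix.head_cons]
  omega

theorem sanov_inj : Function.Injective (FreeGroup.lift (![f1, f2] : Fin 2 → SL2)) := by
  apply FreeGroup.injective_lift_of_ping_pong _ ![X0, X1] ![Y0, Y1] pp_nonempty
  · intro i j hij
    fin_cases i <;> fin_cases j
    · exact absurd rfl hij
    · exact dXX
    · exact dXX.symm
    · exact absurd rfl hij
  · intro i j hij
    fin_cases i <;> fin_cases j
    · exact absurd rfl hij
    · exact dYY
    · exact dYY.symm
    · exact absurd rfl hij
  · intro i j
    fin_cases i <;> fin_cases j
    · exact dXY X0 (Or.inl rfl) Y0 (Or.inl rfl)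
    · exact dXY X0 (Or.inl rfl) Y1 (Or.inr rfl)
    · exact dXY X1 (Or.inr rfl) Y0 (Or.inl rfl)
    · exact dXY X1 (Or.inr rfl) Y1 (Or.inr rfl)
  · intro i
    fin_cases i
    · exact hX0
    · exact hX1
  · intro i
    fin_cases i
    · exact hY0
    · exact hY1

end

lemma range_eq :
    (FreeGroup.lift (![f1, f2] : Fin 2 → SL2)).range = Subgroup.closure {f1, f2} := by
  rw [FreeGroup.range_lift_eq_closure]
  congr 1
  ext g
  constructor
  · rintro ⟨i, rfl⟩
    fin_cases i
    · exact Or.inl rfl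
    · exact Or.inr rfl
  · rintro (rfl | rfl)
    exacts [⟨0, rfl⟩, ⟨1, rfl⟩]

/-- Sanov's theorem: the subgroup of `SL(2,ℤ)` generated by `f1` and `f2` is a free group
of rank 2. -/
theorem sanov_free_subgroup :
    Nonempty ((Subgroup.closure {f1, f2} : Subgroup (Matrix.SpecialLinearGroup (Fin 2) ℤ))
      ≃* FreeGroup (Fin 2)) := by
  exact ⟨((MonoidHom.ofInjective sanov_inj).trans (MulEquiv.subgroupCongr range_eq)).symm⟩
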